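/- If μ ∈ M^e(Σ_D), then exactly one of the following holds: μ(A_0) = 1, μ(A_α) = 1, or μ(A_β) = 1. -/

import Mathlib

open MeasureTheory Topology Filter
open scoped ENNReal NNReal


/-! ### The alphabet of the (M,N) Dyck–Motzkin shift -/

/-- The alphabet `D = D_α ∪ D_0 ∪ D_β` of the `(M,N)` Dyck–Motzkin shift:
`la k` is the left bracket `α_k`, `u k` is the unit `1_k`, `ra k` is the right bracket `β_k`. -/
inductive DMSym (M N : ℕ) : Type where
  | la : Fin M → DMSym M N
  | u  : Fin N → DMSym M N
  | ra : Fin M → DMSym M N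
deriving DecidableEq

namespace DMSym

def equivSum (M N : ℕ) : DMSym M N ≃ (Fin M ⊕ Fin N ⊕ Fin M) where
  toFun s := match s with
    | .la k => Sum.inl k
    | .u k => Sum.inr (Sum.inl k)
    | .ra k => Sum.inr (Sum.inr k)
  invFun s := match s with
    | Sum.inl k => .la k
    | Sum.inr (Sum.inl k) => .u k
    | Sum.inr (Sum.inr k) => .ra k
  left_inv s := by cases s <;> rfl
  right_inv s := by rcases s with k | k | k <;> rfl

instance (M N : ℕ) : Fintype (DMSym M N) := Fintype.ofEquiv _ (equivSum M N).symm
instance (M N : ℕ) : TopologicalSpace (DMSym M N) := ⊥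
instance (M N : ℕ) : DiscreteTopology (DMSym M N) := ⟨rfl⟩
instance (M N : ℕ) : MeasurableSpace (DMSym M N) := ⊤
instance (M N : ℕ) : BorelSpace (DMSym M N) := ⟨borel_eq_top_of_discrete.symm⟩

end DMSym

/-- Nonzero elements of the Dyck–Motzkin monoid with zero are represented in normal form:
`some (bs, as)` is the reduced word `β_{bs(0)} ⋯ β_{bs(r)} α_{as(0)} ⋯ α_{as(s)}`
(in particular `some ([], [])` is the unit element `1`); `none` is the zero element `0`. -/
abbrev DyckElem (M : ℕ) := Option (List (Fin M) × List (Fin M))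

/-- Multiplication, in the Dyck–Motzkin monoid with zero, of an element in normal form on
the right by a generator: units are absorbed, a left bracket is appended, and a right bracket
either closes the last left bracket (if the indices match), is appended (if there is no left
bracket to close), or produces the zero element (if the indices do not match). -/
def dyckStep {M N : ℕ} : DyckElem M → DMSym M N → DyckElem M
  | none, _ => none
  | some (bs, as), .la k => some (bs, as ++ [k])
  | some (bs, as), .u _ => some (bs, as)
  | some (bs, as), .ra k =>
      match as.getLast? with
      | none => some (bs ++ [k], [])
      | some j => if j = k then some (bs, as.dropLast) else none

/-- `red w` is the image of the word `w` in the Dyck–Motzkin monoid with zero. -/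
def red {M N : ℕ} (w : List (DMSym M N)) : DyckElem M :=
  w.foldl dyckStep (some ([], []))

/-- The word `x_j x_{j+1} ⋯ x_k` read off a bi-infinite sequence `x`. -/
def wordAt {M N : ℕ} (x : ℤ → DMSym M N) (j k : ℤ) : List (DMSym M N) :=
  (List.range (k + 1 - j).toNat).map fun n => x (j + n)

/-- The `(M,N)` Dyck–Motzkin shift `Σ_D`. -/
def SigmaD (M N : ℕ) : Set (ℤ → DMSym M N) :=
  {x | ∀ j k : ℤ, j < k → red (wordAt x j k) ≠ none}

/-- The left shift `σ`. -/
def shift {A : Type*} : (ℤ → A) → (ℤ → A) := fun x i => x (i + 1)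

/-- The inverse `σ⁻¹` of the left shift. -/
def shiftInv {A : Type*} : (ℤ → A) → (ℤ → A) := fun x i => x (i - 1)

lemma wordAt_shift {M N : ℕ} (x : ℤ → DMSym M N) (j k : ℤ) :
    wordAt (shift x) j k = wordAt x (j + 1) (k + 1) := by
  simp only [wordAt, shift]
  rw [show (k + 1 + 1 - (j + 1) : ℤ) = k + 1 - j by ring]
  exact List.map_congr_left fun n _ => by rw [show (j + n + 1 : ℤ) = j + 1 + n by ring]

lemma shift_mem_SigmaD {M N : ℕ} {x : ℤ → DMSym M N} (hx : x ∈ SigmaD M N) :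
    shift x ∈ SigmaD M N := by
  intro j k hjk
  rw [wordAt_shift]
  exact hx (j + 1) (k + 1) (by omega)

/-- The left shift acting on `Σ_D`. -/
def shiftD (M N : ℕ) : ↥(SigmaD M N) → ↥(SigmaD M N) :=
  fun x => ⟨shift x.val, shift_mem_SigmaD x.property⟩

section Generic
variable {X : Type*} [MeasurableSpace X]

/-- The set of `T`-invariant Borel probability measures. -/
def InvMeas (T : X → X) : Set (ProbabilityMeasure X) :=
  {μ | MeasurePreserving T μ.toMeasure μ.toMeasure}

/-- The set of `T`-invariant ergodic Borel probability measures. -/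
def ErgMeas (T : X → X) : Set (ProbabilityMeasure X) :=
  {μ | Ergodic T μ.toMeasure}

/-- A `CO`-measure: an invariant ergodic probability measure supported on the orbit of a
single periodic point. -/
def IsCOMeas (T : X → X) (μ : ProbabilityMeasure X) : Prop :=
  Ergodic T μ.toMeasure ∧
    ∃ (x : X) (n : ℕ), 0 < n ∧ T^[n] x = x ∧
      μ.toMeasure {y | ∃ k : ℕ, y = T^[k] x} = 1

/-- Convexity for a set of probability measures: it is stable under taking the convex
combination `t•μ + (1-t)•ν` of any two of its members. -/
def ConvexMeasSet (U : Set (ProbabilityMeasure X)) : Prop :=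
  ∀ μ ∈ U, ∀ ν ∈ U, ∀ t : ℝ≥0∞, t ≤ 1 → ∀ ρ : ProbabilityMeasure X,
    ρ.toMeasure = t • μ.toMeasure + (1 - t) • ν.toMeasure → ρ ∈ U

/-- A measure is fully supported if it gives positive measure to every non-empty open set. -/
def FullSupp [TopologicalSpace X] (μ : ProbabilityMeasure X) : Prop :=
  ∀ U : Set X, IsOpen U → U.Nonempty → 0 < μ.toMeasure U

/-- Measure-theoretic isomorphism of the measure-preserving systems `(X,T,μ)` and `(Y,S,ν)`. -/
def MeasureIso {Y : Type*} [MeasurableSpace Y] (T : X → X) (S : Y → Y)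
    (μ : Measure X) (ν : Measure Y) : Prop :=
  ∃ (φ : X → Y) (ψ : Y → X), Measurable φ ∧ Measurable ψ ∧
    Measure.map φ μ = ν ∧ Measure.map ψ ν = μ ∧
    (∀ᵐ x ∂μ, ψ (φ x) = x) ∧ (∀ᵐ y ∂ν, φ (ψ y) = y) ∧
    (∀ᵐ x ∂μ, φ (T x) = S (φ x))

/-- The system `(X,T,μ)` is Bernoulli: it is measure-theoretically isomorphic to a two-sided
Bernoulli shift, i.e. the left shift on `ℤ → ℕ` equipped with an i.i.d. product measure
(determined by requiring that the measures of all cylinder sets factorize according to a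
fixed distribution `p`). -/
def IsBernoulli (T : X → X) (μ : Measure X) : Prop :=
  ∃ (p : ℕ → ℝ≥0∞) (ν : Measure (ℤ → ℕ)), (∑' n, p n) = 1 ∧
    IsProbabilityMeasure ν ∧
    (∀ (n : ℕ) (w : Fin n → ℕ) (j : ℤ),
      ν {y | ∀ i : Fin n, y (j + (i : ℕ)) = w i} = ∏ i, p (w i)) ∧
    MeasureIso T shift μ ν

end Generic

/-- `M(Σ_D)`: the space of shift-invariant Borel probability measures on `Σ_D`,
endowed with the weak* topology. -/
def MinvD (M N : ℕ) : Set (ProbabilityMeasure ↥(SigmaD M N)) := InvMeas (shiftD M N)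

/-- `M^e(Σ_D)`: the shift-invariant ergodic Borel probability measures on `Σ_D`. -/
def MergD (M N : ℕ) : Set (ProbabilityMeasure ↥(SigmaD M N)) := ErgMeas (shiftD M N)

/-- The integral `∫ f dμ`. -/
noncomputable def intCf {M N : ℕ} (f : C(↥(SigmaD M N), ℝ))
    (μ : ProbabilityMeasure ↥(SigmaD M N)) : ℝ := ∫ x, f x ∂μ.toMeasure

/-- `M_max(f)`: the set of `f`-maximizing measures, i.e. the shift-invariant measures
attaining `sup { ∫ f dν : ν ∈ M(Σ_D) }`. -/
def Mmax (M N : ℕ) (f : C(↥(SigmaD M N), ℝ)) : Set (ProbabilityMeasure ↥(SigmaD M N)) :=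
  {μ ∈ MinvD M N | ∀ ν ∈ MinvD M N, intCf f ν ≤ intCf f μ}

/-- `G_j(x)`: `1` on left brackets, `-1` on right brackets, `0` on units. -/
def Gfun {M N : ℕ} (x : ℤ → DMSym M N) (j : ℤ) : ℤ :=
  match x j with
  | .la _ => 1
  | .u _ => 0
  | .ra _ => -1

/-- `H_i(x) = Σ_{j=0}^{i-1} G_j(x)` for `i ≥ 1`, `H_i(x) = -Σ_{j=i}^{-1} G_j(x)` for
`i ≤ -1`, and `H_0(x) = 0`. -/
def Hfun {M N : ℕ} (x : ℤ → DMSym M N) (i : ℤ) : ℤ :=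
  if 0 ≤ i then ∑ j ∈ Finset.range i.toNat, Gfun x (j : ℤ)
  else -∑ j ∈ Finset.range (-i).toNat, Gfun x (i + (j : ℤ))

/-- The set `A_0`. -/
def A0set (M N : ℕ) : Set (ℤ → DMSym M N) :=
  SigmaD M N ∩ {x | ∀ i : ℤ,
    (∃ j : ℕ, 1 ≤ j ∧ Hfun x (i + (j : ℤ)) = Hfun x i) ∧
    (∃ j : ℕ, 1 ≤ j ∧ Hfun x (i - (j : ℤ)) = Hfun x i)}

/-- The set `A_α`. -/
def AalphaSet (M N : ℕ) : Set (ℤ → DMSym M N) :=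
  SigmaD M N ∩ {x | Tendsto (Hfun x) atTop atTop ∧ Tendsto (Hfun x) atBot atBot}

/-- The set `A_β`. -/
def AbetaSet (M N : ℕ) : Set (ℤ → DMSym M N) :=
  SigmaD M N ∩ {x | Tendsto (Hfun x) atTop atBot ∧ Tendsto (Hfun x) atBot atTop}

set_option linter.unusedSectionVars false
open MeasureTheory Filter

section Birkhoff
variable {X : Type*} [MeasurableSpace X]

/-- Birkhoff sums. -/
noncomputable def birkS (T : X → X) (f : X → ℝ) (n : ℕ) (x : X) : ℝ :=
  ∑ i ∈ Finset.range n, f (T^[i] x)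

variable {T : X → X} {f : X → ℝ}

lemma birkS_zero (x : X) : birkS T f 0 x = 0 := by simp [birkS]

lemma birkS_succ_left (n : ℕ) (x : X) :
    birkS T f (n + 1) x = f x + birkS T f n (T x) := by
  unfold birkS
  rw [Finset.sum_range_succ' (fun i => f (T^[i] x)) n]
  simp [Function.iterate_succ_apply, add_comm]

lemma birkS_add (n m : ℕ) (x : X) :
    birkS T f (n + m) x = birkS T f n x + birkS T f m (T^[n] x) := by
  induction n generalizing x with
  | zero => simp [birkS]
  | succ k ih =>
      have : k + 1 + m = (k + m) + 1 := by ring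
      rw [this, birkS_succ_left, birkS_succ_left, ih (T x), add_assoc,
        Function.iterate_succ_apply]

lemma abs_birkS_le (hb : ∀ x, |f x| ≤ 1) (n : ℕ) (x : X) : |birkS T f n x| ≤ n := by
  calc |birkS T f n x| ≤ ∑ i ∈ Finset.range n, |f (T^[i] x)| :=
        Finset.abs_sum_le_sum_abs _ _
    _ ≤ ∑ _i ∈ Finset.range n, (1:ℝ) := Finset.sum_le_sum fun i _ => hb _
    _ = n := by simp

lemma birkS_measurable (hT : Measurable T) (hf : Measurable f) (n : ℕ) :
    Measurable (birkS T f n) :=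
  Finset.measurable_sum _ fun i _ => hf.comp (hT.iterate i)

lemma birkS_integrable {μ : Measure X} [IsProbabilityMeasure μ]
    (hT : Measurable T) (hf : Measurable f) (hb : ∀ x, |f x| ≤ 1) (n : ℕ) :
    Integrable (birkS T f n) μ := by
  refine Integrable.mono' (integrable_const (n:ℝ)) ((birkS_measurable hT hf n).aestronglyMeasurable)
    (Filter.Eventually.of_forall fun x => ?_)
  simpa using abs_birkS_le hb n x

lemma measurableEmbedding_iterate (hemb : MeasurableEmbedding T) (n : ℕ) :
    MeasurableEmbedding (T^[n]) := by
  induction n with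
  | zero => simpa using MeasurableEmbedding.id
  | succ k ih => rw [Function.iterate_succ']; exact hemb.comp ih

lemma birkS_integral {μ : Measure X} [IsProbabilityMeasure μ]
    (hT : MeasurePreserving T μ μ) (hemb : MeasurableEmbedding T)
    (hf : Measurable f) (hb : ∀ x, |f x| ≤ 1) (n : ℕ) :
    ∫ x, birkS T f n x ∂μ = n * ∫ x, f x ∂μ := by
  unfold birkS
  rw [integral_finset_sum]
  · have : ∀ i, ∫ x, f (T^[i] x) ∂μ = ∫ x, f x ∂μ := fun i =>
      (hT.iterate i).integral_comp (measurableEmbedding_iterate hemb i) f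
    simp [this]
  · intro i _
    refine Integrable.mono' (integrable_const (1:ℝ))
      ((hf.comp (hT.measurable.iterate i)).aestronglyMeasurable)
      (Filter.Eventually.of_forall fun x => ?_)
    simpa using hb (T^[i] x)

end Birkhoff
section Birkhoff2
variable {X : Type*} [MeasurableSpace X]

/-- Points whose Birkhoff averages frequently exceed `q`. -/
def Afreq (T : X → X) (f : X → ℝ) (q : ℚ) : Set X :=
  {x | ∀ N : ℕ, ∃ n, N ≤ n ∧ (q : ℝ) * n < birkS T f n x}

variable {T : X → X} {f : X → ℝ}

lemma measurableSet_Afreq (hT : Measurable T) (hf : Measurable f) (q : ℚ) :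
    MeasurableSet (Afreq T f q) := by
  have : Afreq T f q =
      ⋂ N : ℕ, ⋃ n : ℕ, {x | N ≤ n ∧ (q : ℝ) * n < birkS T f n x} := by
    ext x; simp [Afreq]
  rw [this]
  refine MeasurableSet.iInter fun N => MeasurableSet.iUnion fun n => ?_
  by_cases h : N ≤ n
  · have : {x : X | N ≤ n ∧ (q : ℝ) * n < birkS T f n x}
        = {x | (q : ℝ) * n < birkS T f n x} := by ext x; simp [h]
    rw [this]
    exact measurableSet_lt measurable_const (birkS_measurable hT hf n)
  · have : {x : X | N ≤ n ∧ (q : ℝ) * n < birkS T f n x} = ∅ := by ext x; simp [h]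
    simp [this]

lemma Afreq_step1 (hb : ∀ x, |f x| ≤ 1) {q q' : ℚ} (h : q' < q) {x : X}
    (hx : x ∈ Afreq T f q) : T x ∈ Afreq T f q' := by
  intro N
  -- choose K with (q - q') * K ≥ 1 + |q|
  obtain ⟨K, hK⟩ := exists_nat_ge ((2 + |(q:ℝ)|) / ((q:ℝ) - q'))
  have hqq : (0:ℝ) < (q:ℝ) - q' := by exact_mod_cast sub_pos.mpr h
  obtain ⟨n₀, hn₀, hn₀'⟩ := hx (max (N + 1) (K + 1))
  have h1 : N + 1 ≤ n₀ := le_trans (le_max_left _ _) hn₀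
  have h2 : K + 1 ≤ n₀ := le_trans (le_max_right _ _) hn₀
  refine ⟨n₀ - 1, by omega, ?_⟩
  have hrw : n₀ - 1 + 1 = n₀ := by omega
  have hbk : birkS T f (n₀ - 1) (T x) = birkS T f n₀ x - f x := by
    have := birkS_succ_left (T := T) (f := f) (n₀ - 1) x
    rw [hrw] at this; linarith
  rw [hbk]
  have hfx : f x ≤ 1 := (abs_le.mp (hb x)).2
  have hKle : (2 + |(q:ℝ)|) ≤ ((q:ℝ) - q') * K := by
    rw [div_le_iff₀ hqq] at hK; linarith [hK]
  have hcast : ((n₀ - 1 : ℕ) : ℝ) = (n₀ : ℝ) - 1 := by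
    have : (1:ℕ) ≤ n₀ := by omega
    push_cast [Nat.cast_sub this]; ring
  rw [hcast]
  have hKn : ((K:ℝ)) ≤ (n₀ : ℝ) - 1 := by
    have h5 : ((K:ℝ)) + 1 ≤ (n₀:ℝ) := by exact_mod_cast h2
    linarith
  have key : ((q':ℝ)) * ((n₀:ℝ) - 1) + 1 + f x ≤ (q:ℝ) * n₀ := by
    have h3 : ((q:ℝ) - q') * ((n₀:ℝ)-1) ≥ 2 + |(q:ℝ)| :=
      le_trans hKle (by nlinarith)
    have h4 : -( q:ℝ) ≤ |(q:ℝ)| := neg_le_abs _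
    nlinarith
  linarith [hn₀']

lemma Afreq_step2 (hb : ∀ x, |f x| ≤ 1) {q q' : ℚ} (h : q' < q) {x : X}
    (hx : T x ∈ Afreq T f q) : x ∈ Afreq T f q' := by
  intro N
  obtain ⟨K, hK⟩ := exists_nat_ge ((1 + |(q':ℝ)|) / ((q:ℝ) - q'))
  have hqq : (0:ℝ) < (q:ℝ) - q' := by exact_mod_cast sub_pos.mpr h
  obtain ⟨n₀, hn₀, hn₀'⟩ := hx (max N K)
  refine ⟨n₀ + 1, by omega, ?_⟩
  rw [birkS_succ_left]
  have hfx : -1 ≤ f x := (abs_le.mp (hb x)).1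
  have hKle : (1 + |(q':ℝ)|) ≤ ((q:ℝ) - q') * K := by
    rw [div_le_iff₀ hqq] at hK; linarith [hK]
  have hKn : ((K:ℝ)) ≤ (n₀ : ℝ) := by exact_mod_cast le_trans (le_max_right _ _) hn₀
  have h4 : (q':ℝ) ≤ |(q':ℝ)| := le_abs_self _
  have key : ((q':ℝ)) * ((n₀:ℝ) + 1) ≤ (q:ℝ) * n₀ - 1 := by
    have h3 : ((q:ℝ) - q') * ((n₀:ℝ)) ≥ 1 + |(q':ℝ)| := le_trans hKle (by nlinarith)
    nlinarith
  push_cast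
  linarith [hn₀']

/-- The invariant set `{limsup birkS/n ≥ q}`. -/
def Binv (T : X → X) (f : X → ℝ) (q : ℚ) : Set X :=
  ⋂ r : {r : ℚ // r < q}, Afreq T f r.1

lemma mem_Binv {q : ℚ} {x : X} : x ∈ Binv T f q ↔ ∀ r : ℚ, r < q → x ∈ Afreq T f r := by
  simp [Binv, Set.mem_iInter, Subtype.forall]

lemma measurableSet_Binv (hT : Measurable T) (hf : Measurable f) (q : ℚ) :
    MeasurableSet (Binv T f q) :=
  MeasurableSet.iInter fun r => measurableSet_Afreq hT hf r.1

lemma Binv_preimage (hb : ∀ x, |f x| ≤ 1) (q : ℚ) :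
    T ⁻¹' (Binv T f q) = Binv T f q := by
  ext x
  simp only [Set.mem_preimage, mem_Binv]
  constructor
  · intro hx r hr
    have hmid : r < (r + q)/2 ∧ (r + q)/2 < q := by constructor <;> linarith
    exact Afreq_step2 hb hmid.1 (hx _ hmid.2)
  · intro hx r hr
    have hmid : r < (r + q)/2 ∧ (r + q)/2 < q := by constructor <;> linarith
    exact Afreq_step1 hb hmid.1 (hx _ hmid.2)

lemma Binv_iterate (hb : ∀ x, |f x| ≤ 1) (q : ℚ) {x : X} (hx : x ∈ Binv T f q) (n : ℕ) :
    T^[n] x ∈ Binv T f q := by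
  induction n with
  | zero => simpa using hx
  | succ k ih =>
      rw [Function.iterate_succ_apply']
      have := Binv_preimage (T := T) (f := f) hb q
      rw [← this] at ih; exact ih

end Birkhoff2
section Birkhoff3
variable {X : Type*} [MeasurableSpace X]

/-- Points with no early large average. -/
def BadSet (T : X → X) (f : X → ℝ) (q : ℚ) (N : ℕ) : Set X :=
  {x | ∀ n : ℕ, 1 ≤ n → n ≤ N → birkS T f n x < (q:ℝ) * n}

variable {T : X → X} {f : X → ℝ}

lemma measurableSet_BadSet (hT : Measurable T) (hf : Measurable f) (q : ℚ) (N : ℕ) :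
    MeasurableSet (BadSet T f q N) := by
  have : BadSet T f q N =
      ⋂ n : ℕ, ⋂ (_ : 1 ≤ n) , ⋂ (_ : n ≤ N), {x | birkS T f n x < (q:ℝ) * n} := by
    ext x; simp [BadSet]
  rw [this]
  exact MeasurableSet.iInter fun n => MeasurableSet.iInter fun _ =>
    MeasurableSet.iInter fun _ => measurableSet_lt (birkS_measurable hT hf n) measurable_const

open scoped Classical in
/-- Number of bad indices in an orbit segment. -/
noncomputable def badct (T : X → X) (f : X → ℝ) (q : ℚ) (N L : ℕ) (x : X) : ℕ :=
  ((Finset.range L).filter (fun i => T^[i] x ∈ BadSet T f q N)).card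

open scoped Classical in
lemma badct_succ (q : ℚ) (N L : ℕ) (x : X) :
    badct T f q N (L+1) x
      = badct T f q N L (T x) + (if x ∈ BadSet T f q N then 1 else 0) := by
  classical
  unfold badct
  have h0 : ∀ i : ℕ, T^[i+1] x = T^[i] (T x) := fun i => Function.iterate_succ_apply T i x
  simp only [Finset.card_filter, Finset.sum_range_succ', h0, Function.iterate_zero_apply]
  congr

/-- Monotonicity: bad count along a suffix is at most the total bad count. -/
lemma badct_shift_le (q : ℚ) (N n L : ℕ) (x : X) :
    badct T f q N L (T^[n] x) ≤ badct T f q N (n + L) x := by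
  classical
  unfold badct
  refine Finset.card_le_card_of_injOn (fun i => n + i) (fun i hi => ?_) ?_
  · simp only [Finset.mem_coe, Finset.mem_filter, Finset.mem_range] at hi ⊢
    refine ⟨by omega, ?_⟩
    rw [add_comm n i, Function.iterate_add_apply]
    exact hi.2
  · intro a _ b _ hab
    have : n + a = n + b := hab
    omega

end Birkhoff3
section Birkhoff4
variable {X : Type*} [MeasurableSpace X] {T : X → X} {f : X → ℝ}

lemma kw_pointwise (hb : ∀ x, |f x| ≤ 1) {q q'' : ℚ} (hq2 : (q'':ℝ) ≤ 2) (h : q'' < q) (N : ℕ) :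
    ∀ L : ℕ, ∀ x ∈ Binv T f q,
      (q'':ℝ) * L - 3 * (badct T f q'' N L x) - 3 * N ≤ birkS T f L x := by
  intro L
  induction L using Nat.strong_induction_on with
  | _ L IH =>
    intro x hx
    rcases Nat.eq_zero_or_pos L with hL0 | hLpos
    · subst hL0
      have : (0:ℝ) ≤ 3 * (badct T f q'' N 0 x) + 3 * N := by positivity
      simp only [birkS_zero, Nat.cast_zero, mul_zero]
      linarith
    by_cases hA : ∃ n, 1 ≤ n ∧ n ≤ L ∧ n ≤ N ∧ (q'':ℝ) * n ≤ birkS T f n x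
    · obtain ⟨n, hn1, hnL, hnN, hnval⟩ := hA
      have hsplit : birkS T f L x = birkS T f n x + birkS T f (L - n) (T^[n] x) := by
        have hLeq : L = n + (L - n) := by omega
        conv_lhs => rw [hLeq]
        exact birkS_add n (L - n) x
      have hIH := IH (L - n) (by omega) (T^[n] x) (Binv_iterate hb q hx n)
      have hbadle : (badct T f q'' N (L - n) (T^[n] x) : ℝ) ≤ badct T f q'' N L x := by
        have := badct_shift_le (T := T) (f := f) q'' N n (L - n) x
        have h2 : n + (L - n) = L := by omega
        rw [h2] at this
        exact_mod_cast this
      have hcast : ((L - n : ℕ) : ℝ) = (L : ℝ) - n := by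
        have : n ≤ L := hnL
        push_cast [this]; ring
      rw [hsplit]
      rw [hcast] at hIH
      nlinarith [hIH, hbadle, hnval]
    · by_cases hC : x ∈ BadSet T f q'' N
      · -- step of size one
        obtain ⟨L', rfl⟩ : ∃ L', L = L' + 1 := ⟨L - 1, by omega⟩
        have hTx : T x ∈ Binv T f q := by
          have := Binv_preimage (T := T) (f := f) hb q
          rw [← this] at hx; exact hx
        have hIH := IH L' (by omega) (T x) hTx
        have hbad : (badct T f q'' N (L' + 1) x : ℝ) = badct T f q'' N L' (T x) + 1 := by
          rw [badct_succ, if_pos hC]; push_cast; ring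
        have hfx : -1 ≤ f x := (abs_le.mp (hb x)).1
        rw [birkS_succ_left]
        push_cast
        push_cast at hIH hbad
        nlinarith [hIH, hbad, hfx]
      · -- x not bad, but the witness exceeds L : then L < N
        have hex : ∃ n, 1 ≤ n ∧ n ≤ N ∧ (q'':ℝ) * n ≤ birkS T f n x := by
          by_contra hno
          push_neg at hno
          exact hC fun n h1 h2 => hno n h1 h2
        obtain ⟨n, hn1, hnN, hnval⟩ := hex
        have hLn : L < n := by
          by_contra hc
          exact hA ⟨n, hn1, by omega, hnN, hnval⟩
        have hLN : L ≤ N := by omega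
        have hlow : -(L:ℝ) ≤ birkS T f L x := by
          have h1 := abs_le.mp (abs_birkS_le (T := T) hb L x)
          linarith [h1.1]
        have hbpos : (0:ℝ) ≤ (badct T f q'' N L x : ℝ) := by positivity
        have hcast : (L:ℝ) ≤ (N:ℝ) := by exact_mod_cast hLN
        nlinarith [hlow, hbpos, hcast]

end Birkhoff4
section Birkhoff5
open scoped ENNReal Classical
variable {X : Type*} [MeasurableSpace X] {T : X → X} {f : X → ℝ}
variable {μ : Measure X} [IsProbabilityMeasure μ]

lemma ae_mem_of_compl_null {E : Set X} (h : μ Eᶜ = 0) : ∀ᵐ x ∂μ, x ∈ E := by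
  rw [ae_iff]; simpa [Set.compl_def] using h

lemma meas_eq_one_of_ae {E : Set X} (h : ∀ᵐ x ∂μ, x ∈ E) : μ E = 1 := by
  have h0 : μ Eᶜ = 0 := by
    rw [ae_iff] at h
    simpa [Set.compl_def] using h
  refine le_antisymm prob_le_one ?_
  calc (1:ℝ≥0∞) = μ Set.univ := (measure_univ).symm
    _ = μ (E ∪ Eᶜ) := by rw [Set.union_compl_self]
    _ ≤ μ E + μ Eᶜ := measure_union_le _ _
    _ = μ E := by rw [h0, add_zero]

/-- The bad-count as a real-valued sum of indicators. -/
lemma badct_cast (q : ℚ) (N L : ℕ) (x : X) :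
    (badct T f q N L x : ℝ)
      = ∑ i ∈ Finset.range L, (if T^[i] x ∈ BadSet T f q N then (1:ℝ) else 0) := by
  unfold badct
  rw [Finset.card_filter]
  push_cast
  exact Finset.sum_congr rfl fun i _ => by split <;> simp

lemma badct_le (q : ℚ) (N L : ℕ) (x : X) : badct T f q N L x ≤ L := by
  unfold badct
  exact le_trans (Finset.card_filter_le _ _) (by simp)

lemma badct_measurable (hT : Measurable T) (hf : Measurable f) (q : ℚ) (N L : ℕ) :
    Measurable (fun x => (badct T f q N L x : ℝ)) := by
  have : (fun x => (badct T f q N L x : ℝ))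
      = fun x => ∑ i ∈ Finset.range L, (if T^[i] x ∈ BadSet T f q N then (1:ℝ) else 0) := by
    funext x; exact badct_cast q N L x
  rw [this]
  refine Finset.measurable_sum _ fun i _ => Measurable.ite ?_ measurable_const measurable_const
  exact (hT.iterate i) (measurableSet_BadSet hT hf q N)

lemma badct_integrable (hT : Measurable T) (hf : Measurable f) (q : ℚ) (N L : ℕ) :
    Integrable (fun x => (badct T f q N L x : ℝ)) μ := by
  refine Integrable.mono' (integrable_const (L:ℝ))
    (badct_measurable hT hf q N L).aestronglyMeasurable
    (Filter.Eventually.of_forall fun x => ?_)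
  rw [Real.norm_eq_abs, abs_of_nonneg (by positivity)]
  exact_mod_cast badct_le q N L x

lemma badct_integral (hT : MeasurePreserving T μ μ) (hf : Measurable f)
    (q : ℚ) (N L : ℕ) :
    ∫ x, (badct T f q N L x : ℝ) ∂μ = L * (μ (BadSet T f q N)).toReal := by
  have hmeas : MeasurableSet (BadSet T f q N) := measurableSet_BadSet hT.measurable hf q N
  have hind : ∀ i : ℕ, ∫ x, (if T^[i] x ∈ BadSet T f q N then (1:ℝ) else 0) ∂μ
      = (μ (BadSet T f q N)).toReal := by
    intro i
    have hpre : MeasurableSet (T^[i] ⁻¹' BadSet T f q N) := hmeas.preimage (hT.measurable.iterate i)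
    have heq : (fun x => if T^[i] x ∈ BadSet T f q N then (1:ℝ) else 0)
        = Set.indicator (T^[i] ⁻¹' BadSet T f q N) (fun _ => (1:ℝ)) := by
      ext x; simp [Set.indicator_apply, Set.mem_preimage]
    rw [heq, integral_indicator_const _ hpre, measureReal_def,
      (hT.iterate i).measure_preimage hmeas.nullMeasurableSet]
    simp
  calc ∫ x, (badct T f q N L x : ℝ) ∂μ
      = ∫ x, (∑ i ∈ Finset.range L, if T^[i] x ∈ BadSet T f q N then (1:ℝ) else 0) ∂μ :=
        integral_congr_ae (Filter.Eventually.of_forall fun x => badct_cast q N L x)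
    _ = ∑ i ∈ Finset.range L, ∫ x, (if T^[i] x ∈ BadSet T f q N then (1:ℝ) else 0) ∂μ := by
        refine integral_finset_sum _ fun i _ => ?_
        refine Integrable.mono' (integrable_const (1:ℝ)) ?_ (Filter.Eventually.of_forall fun x => ?_)
        · refine (Measurable.ite ?_ measurable_const measurable_const).aestronglyMeasurable
          exact (hT.measurable.iterate i) hmeas
        · split <;> simp
    _ = L * (μ (BadSet T f q N)).toReal := by simp [hind]

theorem kw_main (hT : Ergodic T μ) (hemb : MeasurableEmbedding T)
    (hf : Measurable f) (hb : ∀ x, |f x| ≤ 1) {q : ℚ} (hq : ∫ x, f x ∂μ < q) :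
    μ (Binv T f q) = 0 := by
  set m := ∫ x, f x ∂μ with hm
  have hTm : Measurable T := hT.toMeasurePreserving.measurable
  by_contra hne
  rcases hT.measure_self_or_compl_eq_zero (measurableSet_Binv hTm hf q) (Binv_preimage hb q)
    with h0 | h1
  · exact hne h0
  -- upper bound on m
  have hmle : m ≤ 1 := by
    rw [hm]
    calc ∫ x, f x ∂μ ≤ ∫ _x, (1:ℝ) ∂μ := by
          refine integral_mono ?_ (integrable_const _) (fun x => (abs_le.mp (hb x)).2)
          exact Integrable.mono' (integrable_const (1:ℝ)) hf.aestronglyMeasurable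
            (Filter.Eventually.of_forall fun x => by simpa using hb x)
      _ = 1 := by simp
  -- pick q'' rational between m and min q (m+1)
  have hlt : m < min (q:ℝ) (m + 1) := lt_min hq (by linarith)
  obtain ⟨q'', hq1, hq2⟩ := exists_rat_btwn hlt
  have hq''q : q'' < q := by
    have := lt_of_lt_of_le hq2 (min_le_left _ _)
    exact_mod_cast this
  have hq''2 : (q'':ℝ) ≤ 2 := by
    have := lt_of_lt_of_le hq2 (min_le_right _ _)
    linarith
  set ε : ℝ := ((q'':ℝ) - m) / 6 with hε
  have hεpos : 0 < ε := by rw [hε]; linarith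
  -- the intersection of bad sets is null
  have hBmeas : ∀ N, MeasurableSet (BadSet T f q'' N) := fun N => measurableSet_BadSet hTm hf q'' N
  have hsub : (⋂ N : ℕ, BadSet T f q'' N) ⊆ (Binv T f q)ᶜ := by
    intro x hxi hxB
    have hxA : x ∈ Afreq T f q'' := mem_Binv.mp hxB q'' hq''q
    obtain ⟨n, hn1, hval⟩ := hxA 1
    have hxn := Set.mem_iInter.mp hxi n
    exact absurd hval (not_lt.mpr (le_of_lt (hxn n hn1 le_rfl)))
  have hnull : μ (⋂ N : ℕ, BadSet T f q'' N) = 0 :=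
    le_antisymm (by rw [← h1]; exact measure_mono hsub) (by simp)
  have hanti : Antitone (fun N : ℕ => BadSet T f q'' N) := by
    intro a b hab x hx n h1n hnb
    exact hx n h1n (le_trans hnb hab)
  have htendsto : Filter.Tendsto (fun N => μ (BadSet T f q'' N)) Filter.atTop (nhds 0) := by
    have := tendsto_measure_iInter_atTop (μ := μ)
      (fun N => (hBmeas N).nullMeasurableSet) hanti ⟨0, measure_ne_top _ _⟩
    rwa [hnull] at this
  have hev : ∀ᶠ N in Filter.atTop, μ (BadSet T f q'' N) < ENNReal.ofReal ε := by
    refine htendsto.eventually_lt_const ?_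
    simpa using ENNReal.ofReal_pos.mpr hεpos
  obtain ⟨N, hN⟩ := hev.exists
  have hNreal : (μ (BadSet T f q'' N)).toReal ≤ ε := by
    have := (ENNReal.toReal_le_toReal (measure_ne_top _ _) (by simp)).mpr hN.le
    rwa [ENNReal.toReal_ofReal hεpos.le] at this
  -- integrate the pointwise bound
  have hae : ∀ᵐ x ∂μ, x ∈ Binv T f q := ae_mem_of_compl_null h1
  have key : ∀ L : ℕ, (q'':ℝ) * L - 3 * ((L:ℝ) * (μ (BadSet T f q'' N)).toReal) - 3 * N
      ≤ (L:ℝ) * m := by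
    intro L
    have hptwise : ∀ᵐ x ∂μ,
        (q'':ℝ) * L - 3 * (badct T f q'' N L x) - 3 * N ≤ birkS T f L x := by
      filter_upwards [hae] with x hx
      exact kw_pointwise hb hq''2 hq''q N L x hx
    have hbint : Integrable (fun x => (badct T f q'' N L x : ℝ)) μ :=
      badct_integrable hTm hf q'' N L
    have hlhs_int : Integrable
        (fun x => (q'':ℝ) * L - 3 * (badct T f q'' N L x) - 3 * N) μ :=
      Integrable.sub (Integrable.sub (integrable_const _) (hbint.const_mul 3)) (integrable_const _)
    have hint := integral_mono_ae hlhs_int (birkS_integrable hTm hf hb L) hptwise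
    rw [birkS_integral hT.toMeasurePreserving hemb hf hb L] at hint
    have hintl : ∫ x, ((q'':ℝ) * L - 3 * (badct T f q'' N L x) - 3 * N) ∂μ
        = (q'':ℝ) * L - 3 * ((L:ℝ) * (μ (BadSet T f q'' N)).toReal) - 3 * N := by
      have heq : (fun x => (q'':ℝ) * L - 3 * (badct T f q'' N L x) - 3 * N)
          = fun x => ((q'':ℝ) * L - 3 * N) - 3 * (badct T f q'' N L x) := by
        funext x; ring
      rw [heq, integral_sub (integrable_const _) (hbint.const_mul 3),
        integral_const, MeasureTheory.integral_const_mul,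
        badct_integral hT.toMeasurePreserving hf q'' N L]
      simp
      ring
    rw [hintl] at hint
    exact hint
  -- contradiction: 3 ε L ≤ 3N + 3 ε L /2 for all L
  obtain ⟨L, hL⟩ := exists_nat_gt ((N:ℝ) / ε)
  have hL1 := key L
  have h3 : (L:ℝ) * ε > N := by
    rw [div_lt_iff₀ hεpos] at hL
    linarith
  have hq''m : (q'':ℝ) - m = 6 * ε := by rw [hε]; ring
  nlinarith [hNreal, hL1, h3, hεpos, Nat.cast_nonneg (α := ℝ) L, Nat.cast_nonneg (α := ℝ) N]

end Birkhoff5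
section Birkhoff6
open scoped ENNReal
variable {X : Type*} [MeasurableSpace X] {T : X → X} {f : X → ℝ}
variable {μ : Measure X} [IsProbabilityMeasure μ]

theorem birkhoff_upper (hT : Ergodic T μ) (hemb : MeasurableEmbedding T)
    (hf : Measurable f) (hb : ∀ x, |f x| ≤ 1) :
    ∀ᵐ x ∂μ, ∀ q : ℚ, (∫ x, f x ∂μ) < q →
      ∃ N : ℕ, ∀ n, N ≤ n → birkS T f n x ≤ (q:ℝ) * n := by
  have hae : ∀ᵐ x ∂μ, ∀ q : ℚ, (∫ x, f x ∂μ) < q → x ∉ Binv T f q := by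
    rw [MeasureTheory.ae_all_iff]
    intro q
    by_cases hq : (∫ x, f x ∂μ) < q
    · have h0 : μ (Binv T f q) = 0 := kw_main hT hemb hf hb hq
      have h1 : ∀ᵐ x ∂μ, x ∉ Binv T f q := by
        rw [ae_iff]; simpa using h0
      filter_upwards [h1] with x hx _
      exact hx
    · exact Filter.Eventually.of_forall fun x h => absurd h hq
  filter_upwards [hae] with x hx q hq
  obtain ⟨q₁, hq₁, hq₁'⟩ := exists_rat_btwn hq
  have hq₁'' : (∫ x, f x ∂μ) < q₁ := by exact_mod_cast hq₁
  have hnot := hx q₁ hq₁''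
  rw [mem_Binv] at hnot
  push_neg at hnot
  obtain ⟨r, hr, hrA⟩ := hnot
  unfold Afreq at hrA
  rw [Set.mem_setOf_eq] at hrA
  push_neg at hrA
  obtain ⟨N, hN⟩ := hrA
  refine ⟨N, fun n hn => ?_⟩
  have h1 : birkS T f n x ≤ (r:ℝ) * n := hN n hn
  have h2 : (r:ℝ) ≤ q := by
    have : r < q := lt_trans hr (by exact_mod_cast hq₁')
    exact_mod_cast this.le
  calc birkS T f n x ≤ (r:ℝ) * n := h1
    _ ≤ (q:ℝ) * n := mul_le_mul_of_nonneg_right h2 (Nat.cast_nonneg n)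

lemma birkS_neg (T : X → X) (f : X → ℝ) (n : ℕ) (x : X) :
    birkS T (fun y => -f y) n x = - birkS T f n x := by
  simp [birkS]

theorem birkhoff_bounds (hT : Ergodic T μ) (hemb : MeasurableEmbedding T)
    (hf : Measurable f) (hb : ∀ x, |f x| ≤ 1) :
    ∀ᵐ x ∂μ, ∀ q r : ℚ, (∫ x, f x ∂μ) < q → (r:ℝ) < (∫ x, f x ∂μ) →
      ∃ N : ℕ, ∀ n, N ≤ n →
        (r:ℝ) * n ≤ birkS T f n x ∧ birkS T f n x ≤ (q:ℝ) * n := by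
  have hup := birkhoff_upper hT hemb hf hb
  have hfneg : Measurable (fun y => -f y) := hf.neg
  have hbneg : ∀ x, |(fun y => -f y) x| ≤ 1 := fun x => by simpa using hb x
  have hdown := birkhoff_upper hT hemb hfneg hbneg
  have hint : (∫ x, (fun y => -f y) x ∂μ) = - ∫ x, f x ∂μ := by
    simpa using integral_neg f (μ := μ)
  filter_upwards [hup, hdown] with x hxu hxd q r hq hr
  have hrneg : (∫ x, (fun y => -f y) x ∂μ) < ((-r : ℚ) : ℝ) := by
    rw [hint]; push_cast; linarith
  obtain ⟨N₁, hN₁⟩ := hxu q hq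
  obtain ⟨N₂, hN₂⟩ := hxd (-r) hrneg
  refine ⟨max N₁ N₂, fun n hn => ⟨?_, hN₁ n (le_trans (le_max_left _ _) hn)⟩⟩
  have := hN₂ n (le_trans (le_max_right _ _) hn)
  rw [birkS_neg] at this
  push_cast at this
  linarith

end Birkhoff6
section Atkinson
open scoped ENNReal Classical
variable {X : Type*} [MeasurableSpace X]

/-- Integer Birkhoff sums. -/
def birkZ (T : X → X) (g : X → ℤ) (n : ℕ) (x : X) : ℤ :=
  ∑ i ∈ Finset.range n, g (T^[i] x)

variable {T : X → X} {g : X → ℤ}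

lemma birkZ_add (n m : ℕ) (x : X) :
    birkZ T g (n + m) x = birkZ T g n x + birkZ T g m (T^[n] x) := by
  induction n generalizing x with
  | zero => simp [birkZ]
  | succ k ih =>
      have h1 : k + 1 + m = (k + m) + 1 := by ring
      have hstep : ∀ j : ℕ, ∀ y : X, birkZ T g (j + 1) y = g y + birkZ T g j (T y) := by
        intro j y
        unfold birkZ
        rw [Finset.sum_range_succ' (fun i => g (T^[i] y)) j]
        simp [Function.iterate_succ_apply, add_comm]
      rw [h1, hstep (k + m) x, hstep k x, ih (T x), add_assoc, Function.iterate_succ_apply]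

lemma abs_birkZ_le (hb : ∀ x, |g x| ≤ 1) (n : ℕ) (x : X) : |birkZ T g n x| ≤ n := by
  calc |birkZ T g n x| ≤ ∑ i ∈ Finset.range n, |g (T^[i] x)| := Finset.abs_sum_le_sum_abs _ _
    _ ≤ ∑ _i ∈ Finset.range n, (1:ℤ) := Finset.sum_le_sum fun i _ => hb _
    _ = n := by simp

lemma birkZ_cast (n : ℕ) (x : X) :
    ((birkZ T g n x : ℤ) : ℝ) = birkS T (fun y => (g y : ℝ)) n x := by
  unfold birkZ birkS
  push_cast
  rfl

lemma measurable_birkZ (hT : Measurable T) (hgm : Measurable g) (n : ℕ) :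
    Measurable (fun x => birkZ T g n x) :=
  Finset.measurable_sum _ fun i _ => hgm.comp (hT.iterate i)

theorem atkinson {μ : Measure X} [IsProbabilityMeasure μ]
    (hT : Ergodic T μ) (hemb : MeasurableEmbedding T)
    (hgm : Measurable g) (hb : ∀ x, |g x| ≤ 1) (hint : ∫ x, ((g x : ℤ) : ℝ) ∂μ = 0) :
    μ {x | ∀ n : ℕ, 1 ≤ n → birkZ T g n x ≠ 0} = 0 := by
  set W := {x | ∀ n : ℕ, 1 ≤ n → birkZ T g n x ≠ 0} with hW
  have hTm : Measurable T := hT.toMeasurePreserving.measurable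
  have hWmeas : MeasurableSet W := by
    have : W = ⋂ n : ℕ, ⋂ (_ : 1 ≤ n), {x | birkZ T g n x ≠ 0} := by
      ext x; simp [hW]
    rw [this]
    refine MeasurableSet.iInter fun n => MeasurableSet.iInter fun _ => ?_
    exact (measurable_birkZ hTm hgm n (MeasurableSet.singleton (0:ℤ))).compl
  by_contra hne
  have hδpos : 0 < (μ W).toReal :=
    ENNReal.toReal_pos hne (measure_ne_top _ _)
  set δ : ℝ := (μ W).toReal with hδ
  -- rationals
  obtain ⟨r, hr1, hr2⟩ := exists_rat_btwn (half_lt_self hδpos)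
  have hrpos : 0 < r := by
    have : (0:ℝ) < r := lt_trans (by linarith) hr1
    exact_mod_cast this
  -- indicator function of W
  set fW : X → ℝ := fun x => if x ∈ W then (1:ℝ) else 0 with hfW
  have hfWmeas : Measurable fW := Measurable.ite hWmeas measurable_const measurable_const
  have hfWb : ∀ x, |fW x| ≤ 1 := by
    intro x; by_cases h : x ∈ W <;> simp [hfW, h]
  have hfWint : ∫ x, fW x ∂μ = δ := by
    have heq : fW = Set.indicator W (fun _ => (1:ℝ)) := by
      funext x; simp [hfW, Set.indicator_apply]
    rw [heq, integral_indicator_const _ hWmeas]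
    simp [hδ, measureReal_def]
  -- the two Birkhoff statements
  have hg' : Measurable (fun x => ((g x : ℤ) : ℝ)) := by
    have : Measurable (fun z : ℤ => (z : ℝ)) := measurable_from_top
    exact this.comp hgm
  have hgb : ∀ x, |((g x : ℤ) : ℝ)| ≤ 1 := by
    intro x
    have := hb x
    rw [← Int.cast_abs]
    exact_mod_cast this
  have hBg := birkhoff_bounds hT hemb hg' hgb
  have hBW := birkhoff_bounds hT hemb hfWmeas hfWb
  have hq4 : (0:ℚ) < r / 4 := by positivity
  have hq4' : ∫ x, ((g x : ℤ) : ℝ) ∂μ < ((r/4 : ℚ) : ℝ) := by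
    rw [hint]; exact_mod_cast hq4
  have hq4'' : ((-(r/4) : ℚ) : ℝ) < ∫ x, ((g x : ℤ) : ℝ) ∂μ := by
    rw [hint]; push_cast; exact_mod_cast neg_neg_of_pos (by have : (0:ℝ) < r := (by exact_mod_cast hrpos); positivity)
  have hWup : ∫ x, fW x ∂μ < ((r + 2 : ℚ) : ℝ) := by
    rw [hfWint]
    have : δ ≤ 1 := by
      rw [hδ]
      exact ENNReal.toReal_le_of_le_ofReal zero_le_one (by simpa using prob_le_one)
    push_cast
    have : (0:ℝ) < r := by exact_mod_cast hrpos
    linarith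
  have hWlow : ((r : ℚ) : ℝ) < ∫ x, fW x ∂μ := by rw [hfWint]; exact_mod_cast hr2
  have hcomb := (hBg.and hBW).exists
  obtain ⟨x, hxg, hxW⟩ := hcomb
  obtain ⟨N₂, hN₂⟩ := hxg (r/4) (-(r/4)) hq4' hq4''
  obtain ⟨N₁, hN₁⟩ := hxW (r + 2) r hWup hWlow
  -- choose n large
  obtain ⟨n₀, hn₀⟩ := exists_nat_gt ((2 * (N₂:ℝ) + 3) / ((r:ℝ)/2))
  set n : ℕ := max N₁ n₀ with hn
  have hnN₁ : N₁ ≤ n := le_max_left _ _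
  have hrn : (2 * (N₂:ℝ) + 3) < ((r:ℝ)/2) * n := by
    have h1 : ((2 * (N₂:ℝ) + 3) / ((r:ℝ)/2)) < n := lt_of_lt_of_le hn₀ (by exact_mod_cast le_max_right N₁ n₀)
    have hr2' : (0:ℝ) < (r:ℝ)/2 := by positivity
    rw [div_lt_iff₀ hr2'] at h1
    linarith
  -- the visit set
  set V : Finset ℕ := (Finset.range n).filter (fun k => T^[k] x ∈ W) with hV
  have hVcard : ((r:ℝ)) * n ≤ V.card := by
    have h1 := (hN₁ n hnN₁).1
    have h2 : birkS T fW n x = V.card := by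
      unfold birkS
      rw [hV, Finset.card_filter]
      push_cast
      refine Finset.sum_congr rfl fun i _ => ?_
      by_cases h : T^[i] x ∈ W <;> simp [hfW, h]
    rw [h2] at h1
    exact h1
  -- injectivity
  have hinj : Set.InjOn (fun k => birkZ T g k x) V := by
    have key : ∀ a b : ℕ, a ∈ V → b ∈ V → a < b → birkZ T g a x ≠ birkZ T g b x := by
      intro a b ha _ hab heq
      have haW : T^[a] x ∈ W := (Finset.mem_filter.mp ha).2
      have hsplit : birkZ T g b x = birkZ T g a x + birkZ T g (b - a) (T^[a] x) := by
        have h0 : b = a + (b - a) := by omega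
        conv_lhs => rw [h0]
        exact birkZ_add a (b - a) x
      have : birkZ T g (b - a) (T^[a] x) = 0 := by omega
      exact haW (b - a) (by omega) this
    intro a ha b hb hab
    rcases Nat.lt_trichotomy a b with h | h | h
    · exact absurd hab (key a b ha hb h)
    · exact h
    · exact absurd hab.symm (key b a hb ha h)
  -- image bound
  set B : ℤ := ⌈(r:ℝ)/4 * n⌉ + N₂ with hB
  have hBnn : 0 ≤ B := by
    rw [hB]
    have : (0:ℝ) ≤ (r:ℝ)/4 * n := by positivity
    have h1 : (0:ℤ) ≤ ⌈(r:ℝ)/4 * n⌉ := Int.ceil_nonneg this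
    omega
  have hmaps : ∀ k ∈ V, birkZ T g k x ∈ Finset.Icc (-B) B := by
    intro k hk
    have hkn : k < n := Finset.mem_range.mp (Finset.mem_filter.mp hk).1
    rw [Finset.mem_Icc]
    rcases le_or_gt k N₂ with hkN | hkN
    · have h1 := abs_birkZ_le (T := T) hb k x
      have h2 : (k:ℤ) ≤ N₂ := by exact_mod_cast hkN
      have h3 : |birkZ T g k x| ≤ (N₂:ℤ) := le_trans h1 h2
      rw [abs_le] at h3
      have h4 : (N₂:ℤ) ≤ B := by
        rw [hB]
        have h5 : (0:ℤ) ≤ ⌈(r:ℝ)/4 * n⌉ := Int.ceil_nonneg (by positivity)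
        omega
      obtain ⟨h31, h32⟩ := h3
      omega
    · have hbnd := hN₂ k (le_of_lt hkN)
      have hup : (birkZ T g k x : ℝ) ≤ (r:ℝ)/4 * n := by
        have := hbnd.2
        rw [← birkZ_cast] at this
        push_cast at this ⊢
        have hkn' : (k:ℝ) ≤ n := by exact_mod_cast hkn.le
        nlinarith [this, hq4, hkn']
      have hlo : -((r:ℝ)/4 * n) ≤ (birkZ T g k x : ℝ) := by
        have := hbnd.1
        rw [← birkZ_cast] at this
        push_cast at this ⊢
        have hkn' : (k:ℝ) ≤ n := by exact_mod_cast hkn.le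
        nlinarith [this, hq4, hkn']
      constructor
      · have h1 : -(((⌈(r:ℝ)/4 * n⌉ : ℤ) : ℝ)) ≤ (birkZ T g k x : ℝ) := by
          have := Int.le_ceil ((r:ℝ)/4 * n)
          linarith
        have h2 : -(⌈(r:ℝ)/4 * n⌉ : ℤ) ≤ birkZ T g k x := by exact_mod_cast h1
        rw [hB]; omega
      · have h1 : (birkZ T g k x : ℝ) ≤ ((⌈(r:ℝ)/4 * n⌉ : ℤ) : ℝ) := by
          have := Int.le_ceil ((r:ℝ)/4 * n)
          linarith
        have h2 : birkZ T g k x ≤ ⌈(r:ℝ)/4 * n⌉ := by exact_mod_cast h1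
        rw [hB]; omega
  have hcard : V.card ≤ (Finset.Icc (-B) B).card :=
    Finset.card_le_card_of_injOn _ hmaps hinj
  have hIcc : ((Finset.Icc (-B) B).card : ℝ) ≤ 2 * ((r:ℝ)/4 * n + 1 + N₂) + 1 := by
    rw [Int.card_Icc]
    have h0 : (B + 1 - -B) = 2*B + 1 := by ring
    rw [h0]
    have h1 : ((2*B+1).toNat : ℝ) = ((2*B+1 : ℤ) : ℝ) := by
      rw [← Int.cast_natCast, Int.toNat_of_nonneg (by omega)]
    rw [h1]
    have hceil : ((⌈(r:ℝ)/4 * n⌉ : ℤ) : ℝ) ≤ (r:ℝ)/4 * n + 1 := by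
      have := Int.ceil_lt_add_one ((r:ℝ)/4 * n)
      linarith
    rw [hB]
    push_cast
    linarith
  have hfinal : ((r:ℝ)) * n ≤ 2 * ((r:ℝ)/4 * n + 1 + N₂) + 1 := by
    calc ((r:ℝ)) * n ≤ V.card := hVcard
      _ ≤ ((Finset.Icc (-B) B).card : ℝ) := by exact_mod_cast hcard
      _ ≤ _ := hIcc
  nlinarith [hfinal, hrn]

end Atkinson
/-! ### Infrastructure for the Dyck–Motzkin shift -/
section DMinfra
variable {M N : ℕ}

/-- The symbol weight. -/
def Gsym : DMSym M N → ℤ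
  | .la _ => 1
  | .u _ => 0
  | .ra _ => -1

lemma Gfun_eq_Gsym (x : ℤ → DMSym M N) (j : ℤ) : Gfun x j = Gsym (x j) := by
  unfold Gfun Gsym
  rcases x j with k | k | k <;> rfl

lemma abs_Gfun_le (x : ℤ → DMSym M N) (j : ℤ) : |Gfun x j| ≤ 1 := by
  rw [Gfun_eq_Gsym]
  rcases x j with k | k | k <;> simp [Gsym]

lemma Hfun_zero (x : ℤ → DMSym M N) : Hfun x 0 = 0 := by simp [Hfun]

lemma Hfun_succ (x : ℤ → DMSym M N) (i : ℤ) :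
    Hfun x (i + 1) = Hfun x i + Gfun x i := by
  rcases le_or_gt 0 i with h | h
  · have h1 : (0:ℤ) ≤ i + 1 := by omega
    have h2 : (i+1).toNat = i.toNat + 1 := by omega
    rw [Hfun, Hfun, if_pos h1, if_pos h, h2, Finset.sum_range_succ]
    congr 2
    omega
  · rcases eq_or_lt_of_le (by omega : i ≤ -1) with h1 | h1
    · subst h1
      simp [Hfun]
    · have h2 : ¬ (0:ℤ) ≤ i + 1 := by omega
      have h3 : ¬ (0:ℤ) ≤ i := by omega
      rw [Hfun, Hfun, if_neg h2, if_neg h3]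
      have h4 : (-i).toNat = (-(i+1)).toNat + 1 := by omega
      rw [h4, Finset.sum_range_succ' (fun j => Gfun x (i + (j:ℤ)))]
      have h5 : ∀ j ∈ Finset.range (-(i+1)).toNat,
          Gfun x (i + ((j+1 : ℕ) : ℤ)) = Gfun x ((i+1) + (j:ℤ)) := by
        intro j _
        congr 1
        push_cast
        ring
      rw [Finset.sum_congr rfl h5]
      simp

lemma shift_iterate_apply {A : Type*} (x : ℤ → A) (n : ℕ) (j : ℤ) :
    (shift^[n] x) j = x (j + n) := by
  induction n generalizing x j with
  | zero => simp
  | succ k ih =>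
      rw [Function.iterate_succ_apply, ih (shift x) j]
      show x (j + k + 1) = _
      congr 1
      push_cast
      ring

lemma shiftInv_iterate_apply {A : Type*} (x : ℤ → A) (n : ℕ) (j : ℤ) :
    (shiftInv^[n] x) j = x (j - n) := by
  induction n generalizing x j with
  | zero => simp
  | succ k ih =>
      rw [Function.iterate_succ_apply, ih (shiftInv x) j]
      show x (j - k - 1) = _
      congr 1
      push_cast
      ring

lemma Hfun_shift (x : ℤ → DMSym M N) (i : ℤ) :
    Hfun (shift x) i = Hfun x (i + 1) - Hfun x 1 := by
  have hG : ∀ j : ℤ, Gfun (shift x) j = Gfun x (j + 1) := by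
    intro j
    rw [Gfun_eq_Gsym, Gfun_eq_Gsym]
    rfl
  induction i using Int.induction_on with
  | zero => simp [Hfun_zero]
  | succ k ih =>
      rw [Hfun_succ, ih, hG]
      have : ((k:ℤ) + 1) + 1 = (k + 1) + 1 := by ring
      rw [show ((k:ℤ) + 1 + 1) = ((k:ℤ) + 1) + 1 from rfl, Hfun_succ x ((k:ℤ)+1)]
      ring
  | pred k ih =>
      have h1 := Hfun_succ (shift x) (-(k:ℤ) - 1)
      have h2 := Hfun_succ x (-(k:ℤ))
      have h3 : (-(k:ℤ) - 1) + 1 = -(k:ℤ) := by ring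
      rw [h3] at h1
      have h4 := hG (-(k:ℤ) - 1)
      have h5 : (-(k:ℤ) - 1) + 1 = -(k:ℤ) := by ring
      rw [h5] at h4
      have h9 : (-(k:ℤ) - 1 + 1) = -(k:ℤ) := by ring
      show Hfun (shift x) (-(k:ℤ) - 1) = Hfun x (-(k:ℤ) - 1 + 1) - Hfun x 1
      rw [h9]
      omega

lemma Hfun_shiftInv (x : ℤ → DMSym M N) (i : ℤ) :
    Hfun (shiftInv x) i = Hfun x (i - 1) - Hfun x (-1) := by
  have key := Hfun_shift (shiftInv x) (i - 1)
  have hs : shift (shiftInv x) = x := by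
    funext j
    show x (j + 1 - 1) = x j
    congr 1
    ring
  rw [hs] at key
  have h1 : i - 1 + 1 = i := by ring
  rw [h1] at key
  have key1 := Hfun_shift (shiftInv x) (-1)
  rw [hs] at key1
  simp [Hfun_zero] at key1
  omega

lemma Hfun_shift_iter (x : ℤ → DMSym M N) (n : ℕ) (i : ℤ) :
    Hfun (shift^[n] x) i = Hfun x (i + n) - Hfun x n := by
  induction n generalizing i with
  | zero => simp [Hfun_zero]
  | succ k ih =>
      rw [Function.iterate_succ_apply', Hfun_shift, ih, ih]
      have h1 : i + 1 + k = i + ((k:ℤ) + 1) := by ring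
      have h2 : (1:ℤ) + k = (k:ℤ) + 1 := by ring
      rw [h1, h2]
      push_cast
      ring

lemma Hfun_shiftInv_iter (x : ℤ → DMSym M N) (n : ℕ) (i : ℤ) :
    Hfun (shiftInv^[n] x) i = Hfun x (i - n) - Hfun x (-(n:ℤ)) := by
  induction n generalizing i with
  | zero => simp [Hfun_zero]
  | succ k ih =>
      rw [Function.iterate_succ_apply', Hfun_shiftInv, ih, ih]
      push_cast
      have h1 : i - 1 - k = i - ((k:ℤ) + 1) := by ring
      have h2 : (-1:ℤ) - k = -((k:ℤ) + 1) := by ring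
      rw [h1, h2]
      ring

lemma Hfun_nat (x : ℤ → DMSym M N) (n : ℕ) :
    Hfun x (n : ℤ) = ∑ j ∈ Finset.range n, Gfun x (j : ℤ) := by
  rw [Hfun, if_pos (by positivity)]
  simp

end DMinfra
section DMsystem
variable {M N : ℕ}

lemma wordAt_shiftInv (x : ℤ → DMSym M N) (j k : ℤ) :
    wordAt (shiftInv x) j k = wordAt x (j - 1) (k - 1) := by
  simp only [wordAt, shiftInv]
  rw [show (k - 1 + 1 - (j - 1) : ℤ) = k + 1 - j by ring]
  exact List.map_congr_left fun n _ => by rw [show (j + n - 1 : ℤ) = j - 1 + n by ring]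

lemma shiftInv_mem_SigmaD {x : ℤ → DMSym M N} (hx : x ∈ SigmaD M N) :
    shiftInv x ∈ SigmaD M N := by
  intro j k hjk
  rw [wordAt_shiftInv]
  exact hx (j - 1) (k - 1) (by omega)

/-- The inverse shift acting on `Σ_D`. -/
def shiftDinv (M N : ℕ) : ↥(SigmaD M N) → ↥(SigmaD M N) :=
  fun x => ⟨shiftInv x.val, shiftInv_mem_SigmaD x.property⟩

lemma measurable_shiftD : Measurable (shiftD M N) := by
  refine Measurable.subtype_mk ?_
  refine measurable_pi_lambda _ fun i => ?_
  exact (measurable_pi_apply (i + 1)).comp measurable_subtype_coe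

lemma measurable_shiftDinv : Measurable (shiftDinv M N) := by
  refine Measurable.subtype_mk ?_
  refine measurable_pi_lambda _ fun i => ?_
  exact (measurable_pi_apply (i - 1)).comp measurable_subtype_coe

lemma shiftD_leftInv (x : ↥(SigmaD M N)) : shiftDinv M N (shiftD M N x) = x := by
  apply Subtype.ext
  funext i
  show x.val (i - 1 + 1) = x.val i
  congr 1
  ring

lemma shiftD_rightInv (x : ↥(SigmaD M N)) : shiftD M N (shiftDinv M N x) = x := by
  apply Subtype.ext
  funext i
  show x.val (i + 1 - 1) = x.val i
  congr 1
  ring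

/-- The shift as a measurable equivalence of `Σ_D`. -/
def shiftEquiv (M N : ℕ) : ↥(SigmaD M N) ≃ᵐ ↥(SigmaD M N) where
  toFun := shiftD M N
  invFun := shiftDinv M N
  left_inv := shiftD_leftInv
  right_inv := shiftD_rightInv
  measurable_toFun := measurable_shiftD
  measurable_invFun := measurable_shiftDinv

lemma shiftD_iterate_val (x : ↥(SigmaD M N)) (n : ℕ) :
    ((shiftD M N)^[n] x).val = shift^[n] x.val := by
  induction n with
  | zero => rfl
  | succ k ih =>
      rw [Function.iterate_succ_apply', Function.iterate_succ_apply']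
      show shift ((shiftD M N)^[k] x).val = _
      rw [ih]

lemma shiftDinv_iterate_val (x : ↥(SigmaD M N)) (n : ℕ) :
    ((shiftDinv M N)^[n] x).val = shiftInv^[n] x.val := by
  induction n with
  | zero => rfl
  | succ k ih =>
      rw [Function.iterate_succ_apply', Function.iterate_succ_apply']
      show shiftInv ((shiftDinv M N)^[k] x).val = _
      rw [ih]

/-- The increment function on the shift space. -/
def Gx (M N : ℕ) : ↥(SigmaD M N) → ℤ := fun x => Gsym (x.val 0)

lemma measurable_Gx : Measurable (Gx M N) := by
  have h1 : Measurable (fun x : ↥(SigmaD M N) => x.val 0) :=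
    (measurable_pi_apply 0).comp measurable_subtype_coe
  exact measurable_from_top.comp h1

lemma abs_Gx_le (x : ↥(SigmaD M N)) : |Gx M N x| ≤ 1 := by
  unfold Gx
  rcases x.val 0 with k | k | k <;> simp [Gsym]

lemma birkZ_shiftD_eq (x : ↥(SigmaD M N)) (n : ℕ) :
    birkZ (shiftD M N) (Gx M N) n x = Hfun x.val (n : ℤ) := by
  rw [Hfun_nat]
  unfold birkZ
  refine Finset.sum_congr rfl fun i _ => ?_
  show Gsym (((shiftD M N)^[i] x).val 0) = _
  rw [shiftD_iterate_val, shift_iterate_apply, Gfun_eq_Gsym]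
  norm_num

lemma birkZ_shiftDinv_eq (x : ↥(SigmaD M N)) (n : ℕ) :
    birkZ (shiftDinv M N) (fun y => Gx M N (shiftDinv M N y)) n x
      = - Hfun x.val (-(n : ℤ)) := by
  have hterm : ∀ i : ℕ, Gx M N (shiftDinv M N ((shiftDinv M N)^[i] x))
      = Gfun x.val (-(i:ℤ) - 1) := by
    intro i
    show Gsym ((shiftDinv M N ((shiftDinv M N)^[i] x)).val 0) = _
    rw [← Function.iterate_succ_apply' (shiftDinv M N) i x, shiftDinv_iterate_val, shiftInv_iterate_apply,
      Gfun_eq_Gsym]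
    congr 2
    push_cast
    ring
  unfold birkZ
  rw [Finset.sum_congr rfl (fun i _ => hterm i)]
  -- now show ∑ = - Hfun x.val (-n)
  induction n with
  | zero => simp [Hfun_zero]
  | succ k ih =>
      rw [Finset.sum_range_succ, ih]
      have h1 : (-(k+1:ℕ) : ℤ) = (-(k:ℤ) - 1) := by push_cast; ring
      rw [h1]
      have h2 := Hfun_succ x.val (-(k:ℤ) - 1)
      have h3 : (-(k:ℤ) - 1 + 1) = -(k:ℤ) := by ring
      rw [h3] at h2
      omega

end DMsystem
section DMpaths
variable {M N : ℕ}

/-- The recurrence condition of `A_0`. -/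
def A0cond (v : ℤ → DMSym M N) : Prop :=
  ∀ i : ℤ, (∃ j : ℕ, 1 ≤ j ∧ Hfun v (i + (j : ℤ)) = Hfun v i) ∧
    (∃ j : ℕ, 1 ≤ j ∧ Hfun v (i - (j : ℤ)) = Hfun v i)

lemma freq_zero_of_A0cond {v : ℤ → DMSym M N} (hc : A0cond v) :
    ∀ K : ℤ, ∃ i : ℤ, K ≤ i ∧ Hfun v i = 0 := by
  have key : ∀ n : ℕ, ∃ i : ℤ, (n : ℤ) ≤ i ∧ Hfun v i = 0 := by
    intro n
    induction n with
    | zero => exact ⟨0, le_refl 0, Hfun_zero v⟩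
    | succ k ih =>
        obtain ⟨i, hi, hz⟩ := ih
        obtain ⟨j, hj1, hj⟩ := (hc i).1
        exact ⟨i + j, by push_cast; omega, by rw [hj]; exact hz⟩
  intro K
  obtain ⟨i, hi, hz⟩ := key K.toNat
  exact ⟨i, le_trans (by omega) hi, hz⟩

lemma not_tendsto_atTop_of_freq_zero {v : ℤ → DMSym M N}
    (h : ∀ K : ℤ, ∃ i : ℤ, K ≤ i ∧ Hfun v i = 0) :
    ¬ Tendsto (Hfun v) atTop atTop := by
  intro ht
  obtain ⟨a, ha⟩ := (tendsto_atTop.mp ht 1).exists_forall_of_atTop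
  obtain ⟨i, hi, hz⟩ := h a
  have := ha i hi
  omega

lemma not_tendsto_atBot_of_freq_zero {v : ℤ → DMSym M N}
    (h : ∀ K : ℤ, ∃ i : ℤ, K ≤ i ∧ Hfun v i = 0) :
    ¬ Tendsto (Hfun v) atTop atBot := by
  intro ht
  obtain ⟨a, ha⟩ := (tendsto_atBot.mp ht (-1)).exists_forall_of_atTop
  obtain ⟨i, hi, hz⟩ := h a
  have := ha i hi
  omega

lemma tendsto_atTop_atBot_contra {v : ℤ → DMSym M N}
    (h1 : Tendsto (Hfun v) atTop atTop) (h2 : Tendsto (Hfun v) atTop atBot) : False := by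
  obtain ⟨a, ha⟩ := (tendsto_atTop.mp h1 1).exists_forall_of_atTop
  obtain ⟨b, hb⟩ := (tendsto_atBot.mp h2 (-1)).exists_forall_of_atTop
  have h3 := ha (max a b) (le_max_left _ _)
  have h4 := hb (max a b) (le_max_right _ _)
  omega

/-- Preimage identities. -/
lemma preimage_A0set :
    (Subtype.val ⁻¹' A0set M N : Set ↥(SigmaD M N)) = {x | A0cond x.val} := by
  ext x
  simp only [Set.mem_preimage, A0set, Set.mem_inter_iff, Set.mem_setOf_eq]
  exact ⟨fun h => h.2, fun h => ⟨x.property, h⟩⟩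

lemma preimage_AalphaSet :
    (Subtype.val ⁻¹' AalphaSet M N : Set ↥(SigmaD M N))
      = {x | Tendsto (Hfun x.val) atTop atTop ∧ Tendsto (Hfun x.val) atBot atBot} := by
  ext x
  simp only [Set.mem_preimage, AalphaSet, Set.mem_inter_iff, Set.mem_setOf_eq]
  exact ⟨fun h => h.2, fun h => ⟨x.property, h⟩⟩

lemma preimage_AbetaSet :
    (Subtype.val ⁻¹' AbetaSet M N : Set ↥(SigmaD M N))
      = {x | Tendsto (Hfun x.val) atTop atBot ∧ Tendsto (Hfun x.val) atBot atTop} := by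
  ext x
  simp only [Set.mem_preimage, AbetaSet, Set.mem_inter_iff, Set.mem_setOf_eq]
  exact ⟨fun h => h.2, fun h => ⟨x.property, h⟩⟩

/-- Drift towards `+∞` forwards. -/
lemma tendsto_H_atTop {v : ℤ → DMSym M N} {r : ℚ} (hr : 0 < (r:ℝ)) {Nb : ℕ}
    (h : ∀ n : ℕ, Nb ≤ n → (r:ℝ) * n ≤ ((Hfun v (n:ℤ) : ℤ) : ℝ)) :
    Tendsto (Hfun v) atTop atTop := by
  rw [tendsto_atTop]
  intro b
  obtain ⟨n₁, hn₁⟩ := exists_nat_ge ((b:ℝ) / (r:ℝ))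
  rw [eventually_atTop]
  refine ⟨((max Nb n₁ : ℕ) : ℤ), fun i hi => ?_⟩
  have hi0 : (0:ℤ) ≤ i := le_trans (by positivity) hi
  set n : ℕ := i.toNat with hn
  have hin : (n : ℤ) = i := Int.toNat_of_nonneg hi0
  have hnNb : Nb ≤ n := by omega
  have hnn₁ : n₁ ≤ n := by omega
  have h1 := h n hnNb
  have h2 : (b:ℝ) ≤ (r:ℝ) * n := by
    rw [div_le_iff₀ hr] at hn₁
    have : (n₁:ℝ) ≤ n := by exact_mod_cast hnn₁
    nlinarith
  have h3 : (b:ℝ) ≤ ((Hfun v (n:ℤ) : ℤ) : ℝ) := le_trans h2 h1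
  have h4 : b ≤ Hfun v (n:ℤ) := by exact_mod_cast h3
  rwa [hin] at h4

/-- Drift towards `-∞` forwards. -/
lemma tendsto_H_atBot {v : ℤ → DMSym M N} {r : ℚ} (hr : 0 < (r:ℝ)) {Nb : ℕ}
    (h : ∀ n : ℕ, Nb ≤ n → ((Hfun v (n:ℤ) : ℤ) : ℝ) ≤ -((r:ℝ) * n)) :
    Tendsto (Hfun v) atTop atBot := by
  rw [tendsto_atBot]
  intro b
  obtain ⟨n₁, hn₁⟩ := exists_nat_ge ((-b:ℝ) / (r:ℝ))
  rw [eventually_atTop]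
  refine ⟨((max Nb n₁ : ℕ) : ℤ), fun i hi => ?_⟩
  have hi0 : (0:ℤ) ≤ i := le_trans (by positivity) hi
  set n : ℕ := i.toNat with hn
  have hin : (n : ℤ) = i := Int.toNat_of_nonneg hi0
  have hnNb : Nb ≤ n := by omega
  have hnn₁ : n₁ ≤ n := by omega
  have h1 := h n hnNb
  have h2 : -((r:ℝ) * n) ≤ (b:ℝ) ∨ True := Or.inr trivial
  have h3 : (-(b:ℝ)) ≤ (r:ℝ) * n := by
    rw [div_le_iff₀ hr] at hn₁
    have : (n₁:ℝ) ≤ n := by exact_mod_cast hnn₁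
    nlinarith
  have h4 : ((Hfun v (n:ℤ) : ℤ) : ℝ) ≤ (b:ℝ) := by linarith
  have h5 : Hfun v (n:ℤ) ≤ b := by exact_mod_cast h4
  rwa [hin] at h5

/-- Backward drift towards `-∞` (so `H_i → -∞` as `i → -∞`). -/
lemma tendsto_H_atBot_atBot {v : ℤ → DMSym M N} {r : ℚ} (hr : 0 < (r:ℝ)) {Nb : ℕ}
    (h : ∀ n : ℕ, Nb ≤ n → ((Hfun v (-(n:ℤ)) : ℤ) : ℝ) ≤ -((r:ℝ) * n)) :
    Tendsto (Hfun v) atBot atBot := by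
  rw [tendsto_atBot]
  intro b
  obtain ⟨n₁, hn₁⟩ := exists_nat_ge ((-b:ℝ) / (r:ℝ))
  rw [eventually_atBot]
  refine ⟨-((max Nb n₁ : ℕ) : ℤ), fun i hi => ?_⟩
  have hi0 : i ≤ 0 := le_trans hi (by omega)
  set n : ℕ := (-i).toNat with hn
  have hin : -(n : ℤ) = i := by omega
  have hnNb : Nb ≤ n := by omega
  have hnn₁ : n₁ ≤ n := by omega
  have h1 := h n hnNb
  have h3 : (-(b:ℝ)) ≤ (r:ℝ) * n := by
    rw [div_le_iff₀ hr] at hn₁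
    have : (n₁:ℝ) ≤ n := by exact_mod_cast hnn₁
    nlinarith
  have h4 : ((Hfun v (-(n:ℤ)) : ℤ) : ℝ) ≤ (b:ℝ) := by linarith
  have h5 : Hfun v (-(n:ℤ)) ≤ b := by exact_mod_cast h4
  rwa [hin] at h5

/-- Backward drift towards `+∞` (so `H_i → +∞` as `i → -∞`). -/
lemma tendsto_H_atBot_atTop {v : ℤ → DMSym M N} {r : ℚ} (hr : 0 < (r:ℝ)) {Nb : ℕ}
    (h : ∀ n : ℕ, Nb ≤ n → (r:ℝ) * n ≤ ((Hfun v (-(n:ℤ)) : ℤ) : ℝ)) :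
    Tendsto (Hfun v) atBot atTop := by
  rw [tendsto_atTop]
  intro b
  obtain ⟨n₁, hn₁⟩ := exists_nat_ge ((b:ℝ) / (r:ℝ))
  rw [eventually_atBot]
  refine ⟨-((max Nb n₁ : ℕ) : ℤ), fun i hi => ?_⟩
  have hi0 : i ≤ 0 := le_trans hi (by omega)
  set n : ℕ := (-i).toNat with hn
  have hin : -(n : ℤ) = i := by omega
  have hnNb : Nb ≤ n := by omega
  have hnn₁ : n₁ ≤ n := by omega
  have h1 := h n hnNb
  have h2 : (b:ℝ) ≤ (r:ℝ) * n := by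
    rw [div_le_iff₀ hr] at hn₁
    have : (n₁:ℝ) ≤ n := by exact_mod_cast hnn₁
    nlinarith
  have h4 : (b:ℝ) ≤ ((Hfun v (-(n:ℤ)) : ℤ) : ℝ) := le_trans h2 h1
  have h5 : b ≤ Hfun v (-(n:ℤ)) := by exact_mod_cast h4
  rwa [hin] at h5

end DMpaths
section DMrec
variable {M N : ℕ}

/-- Points with no forward return of `H` to zero. -/
def WfSet (M N : ℕ) : Set ↥(SigmaD M N) :=
  {x | ∀ n : ℕ, 1 ≤ n → birkZ (shiftD M N) (Gx M N) n x ≠ 0}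

/-- Points with no backward return of `H` to zero. -/
def WbSet (M N : ℕ) : Set ↥(SigmaD M N) :=
  {x | ∀ n : ℕ, 1 ≤ n →
    birkZ (shiftDinv M N) (fun y => Gx M N (shiftDinv M N y)) n x ≠ 0}

lemma measurableSet_WfSet : MeasurableSet (WfSet M N) := by
  have : WfSet M N = ⋂ n : ℕ, ⋂ (_ : 1 ≤ n),
      {x | birkZ (shiftD M N) (Gx M N) n x ≠ 0} := by
    ext x; simp [WfSet]
  rw [this]
  refine MeasurableSet.iInter fun n => MeasurableSet.iInter fun _ => ?_
  exact ((measurable_birkZ measurable_shiftD measurable_Gx n)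
    (MeasurableSet.singleton (0:ℤ))).compl

lemma measurableSet_WbSet : MeasurableSet (WbSet M N) := by
  have : WbSet M N = ⋂ n : ℕ, ⋂ (_ : 1 ≤ n),
      {x | birkZ (shiftDinv M N) (fun y => Gx M N (shiftDinv M N y)) n x ≠ 0} := by
    ext x; simp [WbSet]
  rw [this]
  refine MeasurableSet.iInter fun n => MeasurableSet.iInter fun _ => ?_
  exact ((measurable_birkZ measurable_shiftDinv
    (measurable_Gx.comp measurable_shiftDinv) n)
    (MeasurableSet.singleton (0:ℤ))).compl

lemma not_mem_WfSet {x : ↥(SigmaD M N)} (h : x ∉ WfSet M N) :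
    ∃ j : ℕ, 1 ≤ j ∧ Hfun x.val (j : ℤ) = 0 := by
  unfold WfSet at h
  rw [Set.mem_setOf_eq] at h
  push_neg at h
  obtain ⟨j, hj1, hj⟩ := h
  exact ⟨j, hj1, by rwa [birkZ_shiftD_eq] at hj⟩

lemma not_mem_WbSet {x : ↥(SigmaD M N)} (h : x ∉ WbSet M N) :
    ∃ j : ℕ, 1 ≤ j ∧ Hfun x.val (-(j : ℤ)) = 0 := by
  unfold WbSet at h
  rw [Set.mem_setOf_eq] at h
  push_neg at h
  obtain ⟨j, hj1, hj⟩ := h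
  rw [birkZ_shiftDinv_eq] at hj
  exact ⟨j, hj1, by omega⟩

lemma A0cond_of_orbit (x : ↥(SigmaD M N))
    (hf : ∀ n : ℕ, (shiftD M N)^[n] x ∉ WfSet M N ∧ (shiftDinv M N)^[n] x ∉ WfSet M N
      ∧ (shiftD M N)^[n] x ∉ WbSet M N ∧ (shiftDinv M N)^[n] x ∉ WbSet M N) :
    A0cond x.val := by
  intro i
  constructor
  · -- forward recurrence at level i
    rcases le_or_gt 0 i with hi | hi
    · set n : ℕ := i.toNat with hn
      have hin : (n : ℤ) = i := Int.toNat_of_nonneg hi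
      obtain ⟨j, hj1, hj0⟩ := not_mem_WfSet (hf n).1
      rw [shiftD_iterate_val, Hfun_shift_iter] at hj0
      refine ⟨j, hj1, ?_⟩
      rw [← hin]
      rw [show ((j:ℤ) + n) = (n:ℤ) + j from by ring] at hj0
      omega
    · set n : ℕ := (-i).toNat with hn
      have hin : -(n : ℤ) = i := by omega
      obtain ⟨j, hj1, hj0⟩ := not_mem_WfSet (hf n).2.1
      rw [shiftDinv_iterate_val, Hfun_shiftInv_iter] at hj0
      refine ⟨j, hj1, ?_⟩
      rw [← hin]
      rw [show ((j:ℤ) - n) = (-(n:ℤ)) + j from by ring] at hj0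
      omega
  · -- backward recurrence at level i
    rcases le_or_gt 0 i with hi | hi
    · set n : ℕ := i.toNat with hn
      have hin : (n : ℤ) = i := Int.toNat_of_nonneg hi
      obtain ⟨j, hj1, hj0⟩ := not_mem_WbSet (hf n).2.2.1
      rw [shiftD_iterate_val, Hfun_shift_iter] at hj0
      refine ⟨j, hj1, ?_⟩
      rw [← hin]
      rw [show (-(j:ℤ) + n) = (n:ℤ) - j from by ring] at hj0
      omega
    · set n : ℕ := (-i).toNat with hn
      have hin : -(n : ℤ) = i := by omega
      obtain ⟨j, hj1, hj0⟩ := not_mem_WbSet (hf n).2.2.2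
      rw [shiftDinv_iterate_val, Hfun_shiftInv_iter] at hj0
      refine ⟨j, hj1, ?_⟩
      rw [← hin]
      rw [show (-(j:ℤ) - n) = (-(n:ℤ)) - j from by ring] at hj0
      omega

end DMrec
/-- Lemma 2.1 (trichotomy): every shift-invariant ergodic measure on `Σ_D` gives full
measure to exactly one of the sets `A_0`, `A_α`, `A_β`. -/
theorem ergodic_trichotomy (M N : ℕ) (hM : 2 ≤ M)
    (μ : ProbabilityMeasure ↥(SigmaD M N)) (hμ : μ ∈ MergD M N) :
    (μ.toMeasure (Subtype.val ⁻¹' A0set M N) = 1 ∧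
      μ.toMeasure (Subtype.val ⁻¹' AalphaSet M N) ≠ 1 ∧
      μ.toMeasure (Subtype.val ⁻¹' AbetaSet M N) ≠ 1) ∨
    (μ.toMeasure (Subtype.val ⁻¹' AalphaSet M N) = 1 ∧
      μ.toMeasure (Subtype.val ⁻¹' A0set M N) ≠ 1 ∧
      μ.toMeasure (Subtype.val ⁻¹' AbetaSet M N) ≠ 1) ∨
    (μ.toMeasure (Subtype.val ⁻¹' AbetaSet M N) = 1 ∧
      μ.toMeasure (Subtype.val ⁻¹' A0set M N) ≠ 1 ∧
      μ.toMeasure (Subtype.val ⁻¹' AalphaSet M N) ≠ 1) := by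
  have hergT : Ergodic (shiftD M N) μ.toMeasure := hμ
  have hemb : MeasurableEmbedding (shiftD M N) := (shiftEquiv M N).measurableEmbedding
  have hmpT : MeasurePreserving (shiftD M N) μ.toMeasure μ.toMeasure :=
    hergT.toMeasurePreserving
  have hmpInv : MeasurePreserving (shiftDinv M N) μ.toMeasure μ.toMeasure :=
    MeasurePreserving.symm (shiftEquiv M N) hmpT
  have hembinv : MeasurableEmbedding (shiftDinv M N) :=
    (shiftEquiv M N).symm.measurableEmbedding
  have hergInv : Ergodic (shiftDinv M N) μ.toMeasure := by
    refine ⟨hmpInv, ⟨fun s hs hst => ?_⟩⟩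
    refine hergT.toPreErgodic.aeconst_set hs ?_
    have hcomp : (shiftDinv M N ∘ shiftD M N) = id := funext shiftD_leftInv
    calc shiftD M N ⁻¹' s = shiftD M N ⁻¹' (shiftDinv M N ⁻¹' s) := by rw [hst]
      _ = s := by rw [← Set.preimage_comp, hcomp, Set.preimage_id]
  have hgRmeas : Measurable (fun x : ↥(SigmaD M N) => ((Gx M N x : ℤ) : ℝ)) :=
    measurable_from_top.comp measurable_Gx
  have hgRb : ∀ x : ↥(SigmaD M N), |((Gx M N x : ℤ) : ℝ)| ≤ 1 := fun x => by
    rw [← Int.cast_abs]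
    exact_mod_cast abs_Gx_le x
  set m : ℝ := ∫ x, ((Gx M N x : ℤ) : ℝ) ∂μ.toMeasure with hm
  have hfwd : ∀ (x : ↥(SigmaD M N)) (n : ℕ),
      birkS (shiftD M N) (fun y => ((Gx M N y : ℤ) : ℝ)) n x
        = ((Hfun x.val (n:ℤ) : ℤ) : ℝ) := by
    intro x n
    rw [← birkZ_cast, birkZ_shiftD_eq]
  have hbwd : ∀ (x : ↥(SigmaD M N)) (n : ℕ),
      birkS (shiftDinv M N) (fun y => ((Gx M N (shiftDinv M N y) : ℤ) : ℝ)) n x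
        = -((Hfun x.val (-(n:ℤ)) : ℤ) : ℝ) := by
    intro x n
    rw [← birkZ_cast, birkZ_shiftDinv_eq]
    push_cast
    ring
  have hint' : ∫ x, ((Gx M N (shiftDinv M N x) : ℤ) : ℝ) ∂μ.toMeasure = m := by
    rw [hm]
    exact hmpInv.integral_comp hembinv (fun y => ((Gx M N y : ℤ) : ℝ))
  have hgR'meas : Measurable
      (fun x : ↥(SigmaD M N) => ((Gx M N (shiftDinv M N x) : ℤ) : ℝ)) :=
    hgRmeas.comp measurable_shiftDinv
  have hgR'b : ∀ x : ↥(SigmaD M N), |((Gx M N (shiftDinv M N x) : ℤ) : ℝ)| ≤ 1 :=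
    fun x => hgRb _
  rcases lt_trichotomy m 0 with hneg | hzero | hpos
  · -- CASE m < 0 : A_β has full measure
    obtain ⟨q, hq1, hq2⟩ := exists_rat_btwn hneg
    obtain ⟨r, hr1, hr2⟩ := exists_rat_btwn (show m - 1 < m by linarith)
    have hBf := birkhoff_bounds hergT hemb hgRmeas hgRb
    have hBb := birkhoff_bounds hergInv hembinv hgR'meas hgR'b
    have hrm : ((r:ℚ):ℝ) < m := hr2
    have haeAB : ∀ᵐ x ∂μ.toMeasure, x ∈ Subtype.val ⁻¹' AbetaSet M N := by
      rw [preimage_AbetaSet]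
      filter_upwards [hBf, hBb] with x h1 h2
      obtain ⟨N₁, hN₁⟩ := h1 q r (by rw [← hm]; exact hq1) (by rw [← hm]; exact hrm)
      obtain ⟨N₂, hN₂⟩ := h2 q r (by rw [hint']; exact hq1) (by rw [hint']; exact hrm)
      have hq0 : (0:ℝ) < ((-q : ℚ) : ℝ) := by push_cast; linarith
      constructor
      · refine tendsto_H_atBot hq0 (Nb := N₁) fun n hn => ?_
        have := (hN₁ n hn).2
        rw [hfwd] at this
        push_cast
        linarith
      · refine tendsto_H_atBot_atTop hq0 (Nb := N₂) fun n hn => ?_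
        have := (hN₂ n hn).2
        rw [hbwd] at this
        push_cast
        linarith
    refine Or.inr (Or.inr ⟨meas_eq_one_of_ae haeAB, ?_, ?_⟩)
    · have h0 : μ.toMeasure (Subtype.val ⁻¹' A0set M N) = 0 := by
        refine measure_mono_null ?_ (ae_iff.mp haeAB)
        intro x hx
        rw [preimage_A0set] at hx
        rw [Set.mem_setOf_eq, preimage_AbetaSet, Set.mem_setOf_eq]
        intro hmem
        exact not_tendsto_atBot_of_freq_zero (freq_zero_of_A0cond hx) hmem.1
      rw [h0]
      exact zero_ne_one
    · have h0 : μ.toMeasure (Subtype.val ⁻¹' AalphaSet M N) = 0 := by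
        refine measure_mono_null ?_ (ae_iff.mp haeAB)
        intro x hx
        rw [preimage_AalphaSet] at hx
        rw [Set.mem_setOf_eq, preimage_AbetaSet, Set.mem_setOf_eq]
        intro hmem
        exact tendsto_atTop_atBot_contra hx.1 hmem.1
      rw [h0]
      exact zero_ne_one
  · -- CASE m = 0 : A_0 has full measure
    have hWf0 : μ.toMeasure (WfSet M N) = 0 :=
      atkinson hergT hemb measurable_Gx abs_Gx_le (by rw [← hm]; exact hzero)
    have hWb0 : μ.toMeasure (WbSet M N) = 0 :=
      atkinson hergInv hembinv (measurable_Gx.comp measurable_shiftDinv)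
        (fun x => abs_Gx_le _) (by rw [hint']; exact hzero)
    have haeorb : ∀ᵐ x ∂μ.toMeasure, ∀ n : ℕ,
        (shiftD M N)^[n] x ∉ WfSet M N ∧ (shiftDinv M N)^[n] x ∉ WfSet M N
          ∧ (shiftD M N)^[n] x ∉ WbSet M N ∧ (shiftDinv M N)^[n] x ∉ WbSet M N := by
      rw [MeasureTheory.ae_all_iff]
      intro n
      have hmk : ∀ (S : Set ↥(SigmaD M N)) (T' : ↥(SigmaD M N) → ↥(SigmaD M N)),
          MeasurableSet S → MeasurePreserving T' μ.toMeasure μ.toMeasure →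
          μ.toMeasure S = 0 → (∀ᵐ x ∂μ.toMeasure, T'^[n] x ∉ S) := by
        intro S T' hSm hT' hS0
        have hpre : μ.toMeasure (T'^[n] ⁻¹' S) = 0 := by
          rw [(hT'.iterate n).measure_preimage hSm.nullMeasurableSet]
          exact hS0
        have := measure_eq_zero_iff_ae_notMem.mp hpre
        filter_upwards [this] with x hx
        simpa [Set.mem_preimage] using hx
      have h1 := hmk _ _ measurableSet_WfSet hmpT hWf0
      have h2 := hmk _ _ measurableSet_WfSet hmpInv hWf0
      have h3 := hmk _ _ measurableSet_WbSet hmpT hWb0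
      have h4 := hmk _ _ measurableSet_WbSet hmpInv hWb0
      filter_upwards [h1, h2, h3, h4] with x hx1 hx2 hx3 hx4
      exact ⟨hx1, hx2, hx3, hx4⟩
    have haeA0 : ∀ᵐ x ∂μ.toMeasure, x ∈ Subtype.val ⁻¹' A0set M N := by
      rw [preimage_A0set]
      filter_upwards [haeorb] with x hx
      exact A0cond_of_orbit x hx
    refine Or.inl ⟨meas_eq_one_of_ae haeA0, ?_, ?_⟩
    · have h0 : μ.toMeasure (Subtype.val ⁻¹' AalphaSet M N) = 0 := by
        refine measure_mono_null ?_ (ae_iff.mp haeA0)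
        intro x hx
        rw [preimage_AalphaSet] at hx
        rw [Set.mem_setOf_eq, preimage_A0set, Set.mem_setOf_eq]
        intro hmem
        exact not_tendsto_atTop_of_freq_zero (freq_zero_of_A0cond hmem) hx.1
      rw [h0]
      exact zero_ne_one
    · have h0 : μ.toMeasure (Subtype.val ⁻¹' AbetaSet M N) = 0 := by
        refine measure_mono_null ?_ (ae_iff.mp haeA0)
        intro x hx
        rw [preimage_AbetaSet] at hx
        rw [Set.mem_setOf_eq, preimage_A0set, Set.mem_setOf_eq]
        intro hmem
        exact not_tendsto_atBot_of_freq_zero (freq_zero_of_A0cond hmem) hx.1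
      rw [h0]
      exact zero_ne_one
  · -- CASE m > 0 : A_α has full measure
    obtain ⟨q, hq1, hq2⟩ := exists_rat_btwn (lt_add_one m)
    obtain ⟨r, hr1, hr2⟩ := exists_rat_btwn hpos
    have hBf := birkhoff_bounds hergT hemb hgRmeas hgRb
    have hBb := birkhoff_bounds hergInv hembinv hgR'meas hgR'b
    have hr0 : (0:ℝ) < (r:ℝ) := hr1
    have haeAB : ∀ᵐ x ∂μ.toMeasure, x ∈ Subtype.val ⁻¹' AalphaSet M N := by
      rw [preimage_AalphaSet]
      filter_upwards [hBf, hBb] with x h1 h2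
      obtain ⟨N₁, hN₁⟩ := h1 q r (by rw [← hm]; exact hq1) (by rw [← hm]; exact hr2)
      obtain ⟨N₂, hN₂⟩ := h2 q r (by rw [hint']; exact hq1) (by rw [hint']; exact hr2)
      constructor
      · refine tendsto_H_atTop hr0 (Nb := N₁) fun n hn => ?_
        have := (hN₁ n hn).1
        rw [hfwd] at this
        exact this
      · refine tendsto_H_atBot_atBot hr0 (Nb := N₂) fun n hn => ?_
        have := (hN₂ n hn).1
        rw [hbwd] at this
        linarith
    refine Or.inr (Or.inl ⟨meas_eq_one_of_ae haeAB, ?_, ?_⟩)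
    · have h0 : μ.toMeasure (Subtype.val ⁻¹' A0set M N) = 0 := by
        refine measure_mono_null ?_ (ae_iff.mp haeAB)
        intro x hx
        rw [preimage_A0set] at hx
        rw [Set.mem_setOf_eq, preimage_AalphaSet, Set.mem_setOf_eq]
        intro hmem
        exact not_tendsto_atTop_of_freq_zero (freq_zero_of_A0cond hx) hmem.1
      rw [h0]
      exact zero_ne_one
    · have h0 : μ.toMeasure (Subtype.val ⁻¹' AbetaSet M N) = 0 := by
        refine measure_mono_null ?_ (ae_iff.mp haeAB)
        intro x hx
        rw [preimage_AbetaSet] at hx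
        rw [Set.mem_setOf_eq, preimage_AalphaSet, Set.mem_setOf_eq]
        intro hmem
        exact tendsto_atTop_atBot_contra hmem.1 hx.1
      rw [h0]
      exact zero_ne_one
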